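/- Under the transverse-coordinate setup (arc-length frame path p_f with ‖p_f'‖ ≡ 1, p_f' differentiable at s₀ := s_f(t₀), k(s₀) := ‖p_f''(s₀)‖ ≠ 0; s_f differentiable at t₀; transversality ⟪t(s_f(t)), p(t) − p_f(s_f(t))⟫ = 0 near t₀), let p be differentiable near t₀ with velocity v := p' differentiable at t₀, and let v̄ : ℝ → ℝ³ be differentiable at s₀ with v̄(s_f(t)) = v(t) for all t near t₀. If ⟪t(s₀), v(t₀)⟫ ≠ 0 and 1 − k(s₀) w₁(t₀) ≠ 0, then v̄'(s₀) = ((1 − k(s₀) w₁(t₀)) / ⟪t(s₀), v(t₀)⟫) • v'(t₀); i.e. the arc-length derivative of the velocity equals the acceleration scaled by (1 − k w₁)/⟪t, v⟫. -/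

import Mathlib

open scoped RealInnerProductSpace Matrix

/-- Cross product on `EuclideanSpace ℝ (Fin 3)`. -/
noncomputable def cross3 (u v : EuclideanSpace ℝ (Fin 3)) : EuclideanSpace ℝ (Fin 3) :=
  (WithLp.equiv 2 (Fin 3 → ℝ)).symm
    ![u 1 * v 2 - u 2 * v 1, u 2 * v 0 - u 0 * v 2, u 0 * v 1 - u 1 * v 0]

/-- Tangent vector of an arc-length parameterized curve. -/
noncomputable def tang (p_f : ℝ → EuclideanSpace ℝ (Fin 3)) (s : ℝ) : EuclideanSpace ℝ (Fin 3) :=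
  deriv p_f s

/-- Curvature. -/
noncomputable def curv (p_f : ℝ → EuclideanSpace ℝ (Fin 3)) (s : ℝ) : ℝ :=
  ‖deriv (deriv p_f) s‖

/-- Normal vector. -/
noncomputable def nor (p_f : ℝ → EuclideanSpace ℝ (Fin 3)) (s : ℝ) : EuclideanSpace ℝ (Fin 3) :=
  (curv p_f s)⁻¹ • deriv (deriv p_f) s

/-- Binormal vector. -/
noncomputable def binor (p_f : ℝ → EuclideanSpace ℝ (Fin 3)) (s : ℝ) : EuclideanSpace ℝ (Fin 3) :=
  cross3 (tang p_f s) (nor p_f s)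

/-- Torsion: `τ(s) = ⟪b(s), n'(s)⟫`. -/
noncomputable def tors (p_f : ℝ → EuclideanSpace ℝ (Fin 3)) (s : ℝ) : ℝ :=
  ⟪binor p_f s, deriv (nor p_f) s⟫

/-- First transverse coordinate `w₁(t) = ⟪n(s_f(t)), p(t) − p_f(s_f(t))⟫`. -/
noncomputable def w1 (p_f p : ℝ → EuclideanSpace ℝ (Fin 3)) (s_f : ℝ → ℝ) (t : ℝ) : ℝ :=
  ⟪nor p_f (s_f t), p t - p_f (s_f t)⟫

/-- Second transverse coordinate `w₂(t) = ⟪b(s_f(t)), p(t) − p_f(s_f(t))⟫`. -/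
noncomputable def w2 (p_f p : ℝ → EuclideanSpace ℝ (Fin 3)) (s_f : ℝ → ℝ) (t : ℝ) : ℝ :=
  ⟪binor p_f (s_f t), p t - p_f (s_f t)⟫

theorem spatial_velocity_dynamics
    (p_f p : ℝ → EuclideanSpace ℝ (Fin 3)) (s_f : ℝ → ℝ)
    (vb : ℝ → EuclideanSpace ℝ (Fin 3)) (t₀ : ℝ)
    (hunit : ∀ s : ℝ, ‖deriv p_f s‖ = 1)
    (hd2 : DifferentiableAt ℝ (deriv p_f) (s_f t₀))
    (hk : curv p_f (s_f t₀) ≠ 0)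
    (hp : ∀ᶠ t in nhds t₀, DifferentiableAt ℝ p t)
    (hv : DifferentiableAt ℝ (deriv p) t₀)
    (hsf : DifferentiableAt ℝ s_f t₀)
    (htrans : ∀ᶠ t in nhds t₀, ⟪tang p_f (s_f t), p t - p_f (s_f t)⟫ = 0)
    (hvb : DifferentiableAt ℝ vb (s_f t₀))
    (hcomp : ∀ᶠ t in nhds t₀, vb (s_f t) = deriv p t)
    (hvt : ⟪tang p_f (s_f t₀), deriv p t₀⟫ ≠ 0)
    (hden : 1 - curv p_f (s_f t₀) * w1 p_f p s_f t₀ ≠ 0) :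
    deriv vb (s_f t₀) =
      ((1 - curv p_f (s_f t₀) * w1 p_f p s_f t₀) / ⟪tang p_f (s_f t₀), deriv p t₀⟫) •
        deriv (deriv p) t₀ := by

  have hpf : ∀ s, DifferentiableAt ℝ p_f s := by
    intro s
    by_contra h
    have h0 := deriv_zero_of_not_differentiableAt h
    have := hunit s
    rw [h0, norm_zero] at this
    norm_num at this
  set s₀ := s_f t₀ with hs₀
  set T := deriv p_f s₀ with hT
  set N' := deriv (deriv p_f) s₀ with hN
  set σ := deriv s_f t₀ with hσ
  set v := deriv p t₀ with hv0
  set k := curv p_f s₀ with hkdef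
  set w := w1 p_f p s_f t₀ with hwdef
  have hdsf : HasDerivAt s_f σ t₀ := hsf.hasDerivAt
  have hdp : HasDerivAt p v t₀ := (hp.self_of_nhds).hasDerivAt
  have h1 : HasDerivAt (fun t => deriv p_f (s_f t)) (σ • N') t₀ :=
    hd2.hasDerivAt.scomp t₀ hdsf
  have h2 : HasDerivAt (fun t => p_f (s_f t)) (σ • T) t₀ :=
    (hpf s₀).hasDerivAt.scomp t₀ hdsf
  have h3 : HasDerivAt (fun t => p t - p_f (s_f t)) (v - σ • T) t₀ := hdp.sub h2
  have h4 : HasDerivAt (fun t => ⟪deriv p_f (s_f t), p t - p_f (s_f t)⟫)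
      (⟪T, v - σ • T⟫ + ⟪σ • N', p t₀ - p_f s₀⟫) t₀ := h1.inner ℝ h3
  have heq : (fun t => ⟪deriv p_f (s_f t), p t - p_f (s_f t)⟫) =ᶠ[nhds t₀]
      (fun _ => (0 : ℝ)) := by
    filter_upwards [htrans] with t ht
    simpa [tang] using ht
  have hderiv0 : deriv (fun t => ⟪deriv p_f (s_f t), p t - p_f (s_f t)⟫) t₀ = 0 := by
    rw [heq.deriv_eq]; simp
  have hD : ⟪T, v - σ • T⟫ + ⟪σ • N', p t₀ - p_f s₀⟫ = 0 := by
    rw [← h4.deriv]; exact hderiv0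
  have hTT : ⟪T, T⟫ = 1 := by
    have := real_inner_self_eq_norm_sq T
    rw [hT, hunit s₀] at this
    simpa using this
  have hNP : ⟪N', p t₀ - p_f s₀⟫ = k * w := by
    rw [hwdef]
    unfold w1 nor
    rw [real_inner_smul_left]
    field_simp [hkdef]
    rw [mul_div_right_comm, div_self hk, one_mul]
  have hkey : σ * (1 - k * w) = ⟪T, v⟫ := by
    have := hD
    rw [inner_sub_right, real_inner_smul_right, real_inner_smul_left, hTT, hNP] at this
    linarith
  have hTv : ⟪T, v⟫ ≠ 0 := by
    simpa [tang, hT, hv0] using hvt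
  have hσne : σ ≠ 0 := by
    intro h
    rw [h, zero_mul] at hkey
    exact hTv hkey.symm
  have h5 : HasDerivAt (fun t => vb (s_f t)) (σ • deriv vb s₀) t₀ :=
    hvb.hasDerivAt.scomp t₀ hdsf
  have h6 : HasDerivAt (fun t => vb (s_f t)) (deriv (deriv p) t₀) t₀ :=
    hv.hasDerivAt.congr_of_eventuallyEq hcomp
  have huniq : σ • deriv vb s₀ = deriv (deriv p) t₀ := h5.unique h6
  have : deriv vb s₀ = σ⁻¹ • deriv (deriv p) t₀ := by
    rw [← huniq, smul_smul, inv_mul_cancel₀ hσne, one_smul]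
  rw [this]
  congr 1
  have hσval : σ = ⟪T, v⟫ / (1 - k * w) := by
    field_simp at hkey ⊢
    linarith [hkey]
  rw [hσval]
  simp [div_eq_mul_inv, mul_comm, tang, ← hT, ← hv0]
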